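/- arXiv:2104.00512 — 2 statements merged into one kernel-verified Lean document; each statement's English description precedes it below -/
import Mathlib

section
/- One-step well-definedness and increment bound (Lemma 3.1, items 1–2). Under the one-step setup, almost surely 1 + η·Zᵀ V̄^{−1} Ȳ ≥ 1/2 > 0, the top block of V⁺ := (I_d + ηYYᵀ)V is invertible (so T⁺ is well-defined), and ‖T⁺ − T‖₂ ≤ 2μη·[ν^{1/2}·λ_{1∼p}·(1+τ²) + ν₁·λ_{1∼p}·τ]. -/
open MeasureTheory Matrix Finset

/-! ### Auxiliary vector norm development -/

noncomputable def en {n : ℕ} (x : Fin n → ℝ) : ℝ := Real.sqrt (∑ i, x i ^ 2)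

lemma en_nonneg {n : ℕ} (x : Fin n → ℝ) : 0 ≤ en x := Real.sqrt_nonneg _

lemma en_sq {n : ℕ} (x : Fin n → ℝ) : en x ^ 2 = ∑ i, x i ^ 2 :=
  Real.sq_sqrt (by positivity)

lemma sq_le_en_sq {n : ℕ} (x : Fin n → ℝ) {b : ℝ} (h : en x ≤ b) :
    ∑ i, x i ^ 2 ≤ b ^ 2 := by
  rw [← en_sq]
  have := en_nonneg x
  nlinarith

lemma en_le_of_sq_le {n : ℕ} {x : Fin n → ℝ} {b : ℝ} (hb : 0 ≤ b)
    (h : ∑ i, x i ^ 2 ≤ b ^ 2) : en x ≤ b := by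
  have := Real.sqrt_le_sqrt h
  rwa [Real.sqrt_sq hb] at this

lemma en_smul {n : ℕ} (r : ℝ) (x : Fin n → ℝ) : en (r • x) = |r| * en x := by
  unfold en
  rw [← Real.sqrt_sq_eq_abs, ← Real.sqrt_mul (sq_nonneg r), Finset.mul_sum]
  congr 1
  exact Finset.sum_congr rfl fun i _ => by simp [mul_pow]

lemma en_neg {n : ℕ} (x : Fin n → ℝ) : en (-x) = en x := by
  unfold en; congr 1; exact Finset.sum_congr rfl fun i _ => by simp

lemma abs_dot_le {n : ℕ} (x y : Fin n → ℝ) : |x ⬝ᵥ y| ≤ en x * en y := by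
  have h := Finset.sum_mul_sq_le_sq_mul_sq Finset.univ x y
  rw [← Real.sqrt_sq_eq_abs]
  calc Real.sqrt ((x ⬝ᵥ y) ^ 2) ≤ Real.sqrt ((∑ i, x i ^ 2) * ∑ i, y i ^ 2) :=
        Real.sqrt_le_sqrt (by simpa [dotProduct] using h)
    _ = en x * en y := Real.sqrt_mul (by positivity) _

lemma en_triangle {n : ℕ} (x y : Fin n → ℝ) : en (x + y) ≤ en x + en y := by
  apply en_le_of_sq_le (by have := en_nonneg x; have := en_nonneg y; linarith)
  have hcs := abs_dot_le x y
  have hd : x ⬝ᵥ y = ∑ i, x i * y i := rfl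
  have hexp : ∑ i, (x + y) i ^ 2 = ∑ i, x i ^ 2 + 2 * (x ⬝ᵥ y) + ∑ i, y i ^ 2 := by
    rw [hd, Finset.mul_sum, ← Finset.sum_add_distrib, ← Finset.sum_add_distrib]
    exact Finset.sum_congr rfl fun i _ => by simp [Pi.add_apply]; ring
  rw [hexp, ← en_sq x, ← en_sq y]
  have := abs_le.mp hcs
  nlinarith [en_nonneg x, en_nonneg y]

lemma en_sub_le {n : ℕ} (x y : Fin n → ℝ) : en (x - y) ≤ en x + en y := by
  have := en_triangle x (-y)
  simpa [sub_eq_add_neg, en_neg] using this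

/-- key PSD-shift estimate at vector level -/
lemma keyvec {n : ℕ} (a y : Fin n → ℝ) (c : ℝ) (hc : ∑ i, a i ^ 2 ≤ c) :
    en ((a ⬝ᵥ y) • a - (c / 2) • y) ≤ c / 2 * en y := by
  have hc0 : 0 ≤ c := le_trans (by positivity) hc
  apply en_le_of_sq_le (by have := en_nonneg y; positivity)
  have hd : a ⬝ᵥ y = ∑ i, a i * y i := rfl
  have hexp : ∑ i, ((a ⬝ᵥ y) • a - (c / 2) • y) i ^ 2
      = (a ⬝ᵥ y) ^ 2 * (∑ i, a i ^ 2) - c * (a ⬝ᵥ y) * (∑ i, a i * y i)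
        + (c / 2) ^ 2 * ∑ i, y i ^ 2 := by
    rw [Finset.mul_sum, Finset.mul_sum, Finset.mul_sum, ← Finset.sum_sub_distrib,
      ← Finset.sum_add_distrib]
    exact Finset.sum_congr rfl fun i _ => by
      simp only [Pi.sub_apply, Pi.smul_apply, smul_eq_mul]; ring
  rw [hexp, ← hd, mul_pow]
  nlinarith [sq_nonneg (a ⬝ᵥ y), en_sq y, sq_nonneg (en y)]

/-- Spectral norm (ℓ²-operator norm) of a real matrix. -/
noncomputable def specNorm {m n : ℕ} (A : Matrix (Fin m) (Fin n) ℝ) : ℝ :=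
  sSup {c : ℝ | ∃ x : Fin n → ℝ, ∑ j, x j ^ 2 ≤ 1 ∧ c = Real.sqrt (∑ i, (A.mulVec x) i ^ 2)}

lemma specSet_nonempty {m n : ℕ} (A : Matrix (Fin m) (Fin n) ℝ) :
    {c : ℝ | ∃ x : Fin n → ℝ, ∑ j, x j ^ 2 ≤ 1 ∧
      c = Real.sqrt (∑ i, (A.mulVec x) i ^ 2)}.Nonempty :=
  ⟨Real.sqrt (∑ i, (A.mulVec 0) i ^ 2), 0, by simp, rfl⟩

lemma specSet_bddAbove {m n : ℕ} (A : Matrix (Fin m) (Fin n) ℝ) :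
    BddAbove {c : ℝ | ∃ x : Fin n → ℝ, ∑ j, x j ^ 2 ≤ 1 ∧
      c = Real.sqrt (∑ i, (A.mulVec x) i ^ 2)} := by
  refine ⟨Real.sqrt (∑ i, ∑ j, A i j ^ 2), ?_⟩
  rintro c ⟨x, hx, rfl⟩
  apply Real.sqrt_le_sqrt
  apply Finset.sum_le_sum
  intro i _
  have h1 : (A.mulVec x) i ^ 2 ≤ (∑ j, A i j ^ 2) * ∑ j, x j ^ 2 := by
    simpa [Matrix.mulVec, dotProduct] using
      Finset.sum_mul_sq_le_sq_mul_sq Finset.univ (fun j => A i j) x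
  have h2 : (∑ j, A i j ^ 2) * ∑ j, x j ^ 2 ≤ (∑ j, A i j ^ 2) * 1 :=
    mul_le_mul_of_nonneg_left hx (by positivity)
  linarith

lemma specNorm_le {m n : ℕ} {A : Matrix (Fin m) (Fin n) ℝ} {C : ℝ}
    (h : ∀ x : Fin n → ℝ, ∑ j, x j ^ 2 ≤ 1 → en (A.mulVec x) ≤ C) :
    specNorm A ≤ C := by
  apply csSup_le (specSet_nonempty A)
  rintro c ⟨x, hx, rfl⟩
  exact h x hx

lemma en_mulVec_le {m n : ℕ} (A : Matrix (Fin m) (Fin n) ℝ) (x : Fin n → ℝ) :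
    en (A.mulVec x) ≤ specNorm A * en x := by
  rcases eq_or_ne (en x) 0 with h0 | h0
  · have hs : ∑ i, x i ^ 2 = 0 := by
      have := en_sq x; rw [h0] at this; linarith [this.symm.le, this.le]
    have hx0 : x = 0 := by
      funext i
      have := (Finset.sum_eq_zero_iff_of_nonneg (fun j _ => sq_nonneg (x j))).mp hs i
        (Finset.mem_univ i)
      exact pow_eq_zero_iff (by norm_num) |>.mp this
    simp [hx0, h0, en, Matrix.mulVec_zero]
  · have hpos : 0 < en x := lt_of_le_of_ne (en_nonneg x) (Ne.symm h0)
    set t := en x with ht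
    have hx1 : ∑ j, (t⁻¹ • x) j ^ 2 ≤ 1 := by
      have : ∑ j, (t⁻¹ • x) j ^ 2 = t⁻¹ ^ 2 * ∑ j, x j ^ 2 := by
        rw [Finset.mul_sum]; exact Finset.sum_congr rfl fun j _ => by
          simp [Pi.smul_apply, smul_eq_mul, mul_pow]
      rw [this, ← en_sq x, ← ht]
      field_simp
      exact le_refl _
    have hmem : en (A.mulVec (t⁻¹ • x)) ≤ specNorm A :=
      le_csSup (specSet_bddAbove A) ⟨t⁻¹ • x, hx1, rfl⟩
    rw [Matrix.mulVec_smul, en_smul, abs_of_nonneg (by positivity)] at hmem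
    calc en (A.mulVec x) = t * (t⁻¹ * en (A.mulVec x)) := by field_simp
      _ ≤ t * specNorm A := mul_le_mul_of_nonneg_left hmem hpos.le
      _ = specNorm A * t := mul_comm _ _

lemma specNorm_nonneg {m n : ℕ} (A : Matrix (Fin m) (Fin n) ℝ) : 0 ≤ specNorm A := by
  have : (0:ℝ) ∈ {c : ℝ | ∃ x : Fin n → ℝ, ∑ j, x j ^ 2 ≤ 1 ∧
      c = Real.sqrt (∑ i, (A.mulVec x) i ^ 2)} := ⟨0, by simp, by simp [Matrix.mulVec_zero]⟩
  exact le_csSup (specSet_bddAbove A) this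

/-- Top `p×p` block of a `d×p` matrix. -/
def topBlock {d p : ℕ} (h : p ≤ d) (X : Matrix (Fin d) (Fin p) ℝ) :
    Matrix (Fin p) (Fin p) ℝ :=
  Matrix.of fun i j => X (Fin.castLE h i) j

/-- Bottom `(d−p)×p` block of a `d×p` matrix. -/
def botBlock {d p : ℕ} (X : Matrix (Fin d) (Fin p) ℝ) :
    Matrix (Fin (d - p)) (Fin p) ℝ :=
  Matrix.of fun i j => X ⟨p + i, by have := i.isLt; omega⟩ j

lemma sum_split {d p : ℕ} (h : p < d) (f : Fin d → ℝ) :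
    ∑ i, f i = (∑ j : Fin p, f (Fin.castLE h.le j)) +
      ∑ j : Fin (d - p), f ⟨p + j, by have := j.isLt; clear h; omega⟩ := by
  rw [← Equiv.sum_comp (finCongr (by omega : p + (d - p) = d)) f, Fin.sum_univ_add]
  exact congrArg₂ (· + ·)
    (Finset.sum_congr rfl fun j _ => congrArg f (Fin.ext (by simp)))
    (Finset.sum_congr rfl fun j _ => congrArg f (Fin.ext (by simp)))

lemma topBlock_mulVec {d p : ℕ} (h : p ≤ d) (X : Matrix (Fin d) (Fin p) ℝ)
    (y : Fin p → ℝ) (j : Fin p) :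
    (topBlock h X).mulVec y j = X.mulVec y (Fin.castLE h j) := rfl

lemma botBlock_mulVec {d p : ℕ} (X : Matrix (Fin d) (Fin p) ℝ)
    (y : Fin p → ℝ) (j : Fin (d - p)) :
    (botBlock X).mulVec y j = X.mulVec y ⟨p + j, by have := j.isLt; omega⟩ := rfl

lemma mul_vecMulVec {m n k : ℕ} (A : Matrix (Fin m) (Fin n) ℝ) (b : Fin n → ℝ)
    (c : Fin k → ℝ) : A * vecMulVec b c = vecMulVec (A.mulVec b) c := by
  ext i j
  simp [Matrix.mul_apply, vecMulVec_apply, Matrix.mulVec, dotProduct,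
    Finset.sum_mul]
  exact Finset.sum_congr rfl fun l _ => by ring

lemma vecMulVec_mul {m n k : ℕ} (a : Fin m → ℝ) (b : Fin n → ℝ)
    (M : Matrix (Fin n) (Fin k) ℝ) :
    vecMulVec a b * M = vecMulVec a (Matrix.vecMul b M) := by
  ext i j
  simp [Matrix.mul_apply, vecMulVec_apply, Matrix.vecMul, dotProduct,
    Finset.mul_sum]
  exact Finset.sum_congr rfl fun l _ => by ring

lemma vecMulVec_mul_vecMulVec {m n k : ℕ} (a : Fin m → ℝ) (b : Fin n → ℝ)
    (c : Fin n → ℝ) (e : Fin k → ℝ) :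
    vecMulVec a b * vecMulVec c e = (b ⬝ᵥ c) • vecMulVec a e := by
  ext i j
  simp [Matrix.mul_apply, vecMulVec_apply, dotProduct, Finset.sum_mul,
    Finset.mul_sum]
  exact Finset.sum_congr rfl fun l _ => by ring

lemma vecMulVec_add_left {m n : ℕ} (a b : Fin m → ℝ) (c : Fin n → ℝ) :
    vecMulVec (a + b) c = vecMulVec a c + vecMulVec b c := by
  ext i j; simp [vecMulVec_apply]; ring

lemma vecMulVec_mulVec {m n : ℕ} (a : Fin m → ℝ) (b : Fin n → ℝ) (x : Fin n → ℝ) :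
    (vecMulVec a b).mulVec x = (b ⬝ᵥ x) • a := by
  funext i
  simp [Matrix.mulVec, vecMulVec_apply, dotProduct, Finset.sum_mul, Finset.mul_sum]
  exact Finset.sum_congr rfl fun l _ => by ring

lemma det_one_add_smul_vecMulVec {p : ℕ} (η : ℝ) (u w : Fin p → ℝ) :
    Matrix.det (1 + η • vecMulVec u w) = 1 + η * (w ⬝ᵥ u) := by
  have h1 : η • vecMulVec u w = vecMulVec (η • u) w := by
    ext i j; simp [vecMulVec_apply]; ring
  rw [h1, vecMulVec_eq (Fin 1), Matrix.det_one_add_replicateCol_mul_replicateRow]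
  simp [dotProduct, Finset.mul_sum]
  exact Finset.sum_congr rfl fun l _ => by ring

set_option maxHeartbeats 2000000 in
/-- One-step well-definedness and increment bound (Lemma 3.1, items 1–2):
under the one-step setup, almost surely `1 + ηZᵀV̄⁻¹Ȳ ≥ 1/2 > 0`, the top block of
`V⁺ = (I + ηYYᵀ)V` is invertible, and
`‖T⁺ − T‖₂ ≤ 2μη(ν^{1/2}λ_{1∼p}(1+τ²) + ν₁λ_{1∼p}τ)`. -/
theorem oja_one_step_increment
    (Ω : Type) [MeasurableSpace Ω] (μ : Measure Ω) [IsProbabilityMeasure μ]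
    (d p : ℕ) (hp : 1 ≤ p) (hpd : p < d)
    (lam : Fin d → ℝ) (hmono : Antitone lam) (hpos : ∀ i, 0 < lam i)
    (V : Matrix (Fin d) (Fin p) ℝ) (hV : Vᵀ * V = 1)
    (hVtop : IsUnit (topBlock hpd.le V))
    (Y : Ω → Fin d → ℝ) (hY : Measurable Y)
    (η m κ : ℝ) (hη : 0 < η) (hm : 1 ≤ m) :
    let lam1p : ℝ := ∑ j : Fin p, lam (Fin.castLE hpd.le j)
    let lamRest : ℝ := ∑ i : Fin (d - p), lam ⟨p + i, by have := i.isLt; omega⟩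
    let ν : ℝ := lamRest / lam1p
    let ν₁ : ℝ := max 1 ν
    let T : Matrix (Fin (d - p)) (Fin p) ℝ := botBlock V * (topBlock hpd.le V)⁻¹
    let τ : ℝ := specNorm T
    τ ≤ κ →
    2 * lam1p * Real.sqrt (κ ^ 2 + 1) * m * η ≤ 1 →
    (∀ᵐ ω ∂μ, Real.sqrt (∑ j : Fin p, (∑ i, V i j * Y ω i) ^ 2) ≤ Real.sqrt (lam1p * m) ∧
      ∀ i, |Y ω i| ≤ Real.sqrt (lam i * m)) →
    (∀ᵐ ω ∂μ,
      (1 / 2 : ℝ) ≤ 1 + η * ((fun j => ∑ i, V i j * Y ω i) ⬝ᵥ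
          (topBlock hpd.le V)⁻¹.mulVec (fun j : Fin p => Y ω (Fin.castLE hpd.le j))) ∧
      IsUnit (topBlock hpd.le
        (((1 : Matrix (Fin d) (Fin d) ℝ) + η • Matrix.vecMulVec (Y ω) (Y ω)) * V)) ∧
      specNorm
          (botBlock (((1 : Matrix (Fin d) (Fin d) ℝ) + η • Matrix.vecMulVec (Y ω) (Y ω)) * V) *
              (topBlock hpd.le
                (((1 : Matrix (Fin d) (Fin d) ℝ) + η • Matrix.vecMulVec (Y ω) (Y ω)) * V))⁻¹ - T) ≤
        2 * m * η * (Real.sqrt ν * lam1p * (1 + τ ^ 2) + ν₁ * lam1p * τ)) := by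
  intro lam1p lamRest ν ν₁ T τ hτκ hsmall hae
  have hm0 : (0:ℝ) < m := lt_of_lt_of_le one_pos hm
  have hlam1p : 0 < lam1p := by
    have : Nonempty (Fin p) := ⟨⟨0, hp⟩⟩
    exact Finset.sum_pos (fun i _ => hpos _) Finset.univ_nonempty
  have hlamRest : 0 < lamRest := by
    have : Nonempty (Fin (d - p)) := ⟨⟨0, by omega⟩⟩
    exact Finset.sum_pos (fun i _ => hpos _) Finset.univ_nonempty
  have hν : 0 ≤ ν := div_nonneg hlamRest.le hlam1p.le
  have hν₁1 : (1:ℝ) ≤ ν₁ := le_max_left _ _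
  have hνν₁ : ν ≤ ν₁ := le_max_right _ _
  have hτ0 : 0 ≤ τ := specNorm_nonneg T
  have hκ0 : 0 ≤ κ := le_trans hτ0 hτκ
  have hrest_eq : lamRest = ν * lam1p := by
    exact (div_mul_cancel₀ lamRest hlam1p.ne').symm
  set B := topBlock hpd.le V with hBdef
  set C := botBlock V with hCdef
  have hTdef : T = C * B⁻¹ := rfl
  have hdetB : IsUnit B.det := (Matrix.isUnit_iff_isUnit_det B).mp hVtop
  have hBinvB : B⁻¹ * B = 1 := Matrix.nonsing_inv_mul B hdetB
  have hBBinv : B * B⁻¹ = 1 := Matrix.mul_nonsing_inv B hdetB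
  have hTB : T * B = C := by
    rw [hTdef, Matrix.mul_assoc, hBinvB, Matrix.mul_one]
  filter_upwards [hae] with ω hω
  obtain ⟨hZbound, hYbound⟩ := hω
  set Zv : Fin p → ℝ := fun j => ∑ i, V i j * Y ω i with hZvdef
  set Ytop : Fin p → ℝ := fun j => Y ω (Fin.castLE hpd.le j) with hYtopdef
  set Ybot : Fin (d - p) → ℝ :=
    fun j => Y ω ⟨p + j, by have := j.isLt; omega⟩ with hYbotdef
  -- entrywise norm bounds
  have hYsq : ∀ i, (Y ω i) ^ 2 ≤ lam i * m := by
    intro i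
    have h := hYbound i
    have hnn : (0:ℝ) ≤ lam i * m := mul_nonneg (hpos i).le hm0.le
    calc (Y ω i) ^ 2 = |Y ω i| ^ 2 := (sq_abs _).symm
      _ ≤ Real.sqrt (lam i * m) ^ 2 := pow_le_pow_left₀ (abs_nonneg _) h 2
      _ = lam i * m := Real.sq_sqrt hnn
  have hYtop2 : ∑ j, Ytop j ^ 2 ≤ lam1p * m := by
    rw [Finset.sum_mul]
    exact Finset.sum_le_sum fun j _ => hYsq _
  have hYbot2 : ∑ j, Ybot j ^ 2 ≤ lamRest * m := by
    rw [Finset.sum_mul]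
    exact Finset.sum_le_sum fun j _ => hYsq _
  have hl1m : (0:ℝ) ≤ lam1p * m := by positivity
  have hYtopen : en Ytop ≤ Real.sqrt (lam1p * m) :=
    en_le_of_sq_le (Real.sqrt_nonneg _) (by rwa [Real.sq_sqrt hl1m])
  have hYboten : en Ybot ≤ Real.sqrt (lamRest * m) :=
    en_le_of_sq_le (Real.sqrt_nonneg _) (by rw [Real.sq_sqrt (by positivity)]; exact hYbot2)
  have hZen : en Zv ≤ Real.sqrt (lam1p * m) := hZbound
  -- the fundamental identity ‖B⁻¹y‖² = ‖y‖² + ‖Ty‖²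
  have key_inv : ∀ y : Fin p → ℝ,
      ∑ j, (B⁻¹.mulVec y) j ^ 2 = (∑ j, y j ^ 2) + ∑ j, (T.mulVec y) j ^ 2 := by
    intro y
    set z := B⁻¹.mulVec y with hz
    have hyz : B.mulVec z = y := by
      rw [hz, Matrix.mulVec_mulVec, hBBinv, Matrix.one_mulVec]
    have hTy : T.mulVec y = C.mulVec z := by
      rw [hTdef, hz, Matrix.mulVec_mulVec]
    have hVz : ∑ i, (V.mulVec z) i ^ 2 = ∑ j, z j ^ 2 := by
      have h1 : (V.mulVec z) ⬝ᵥ (V.mulVec z) = z ⬝ᵥ z := by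
        rw [Matrix.dotProduct_mulVec]
        have h2 : Matrix.vecMul (V.mulVec z) V = z := by
          have : Matrix.vecMul (V.mulVec z) V = Vᵀ.mulVec (V.mulVec z) := by
            rw [Matrix.mulVec_transpose]
          rw [this, Matrix.mulVec_mulVec, hV, Matrix.one_mulVec]
        rw [h2]
      simpa [dotProduct, sq] using h1
    have hsp := sum_split hpd (fun i => (V.mulVec z) i ^ 2)
    have htopz : ∀ j : Fin p, (V.mulVec z) (Fin.castLE hpd.le j) = (B.mulVec z) j := fun j => rfl
    have hbotz : ∀ j : Fin (d - p),
        (V.mulVec z) ⟨p + j, by have := j.isLt; omega⟩ = (C.mulVec z) j := fun j => rfl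
    calc ∑ j, z j ^ 2 = ∑ i, (V.mulVec z) i ^ 2 := hVz.symm
      _ = (∑ j : Fin p, (B.mulVec z) j ^ 2) + ∑ j : Fin (d - p), (C.mulVec z) j ^ 2 := by
          rw [hsp]
          exact congrArg₂ (· + ·)
            (Finset.sum_congr rfl fun j _ => by rw [htopz j])
            (Finset.sum_congr rfl fun j _ => by rw [hbotz j])
      _ = (∑ j, y j ^ 2) + ∑ j, (T.mulVec y) j ^ 2 := by rw [hyz, hTy]
  -- part 1
  set s : ℝ := Zv ⬝ᵥ (B⁻¹.mulVec Ytop) with hsdef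
  have hTYtop : en (T.mulVec Ytop) ≤ τ * Real.sqrt (lam1p * m) :=
    le_trans (en_mulVec_le T Ytop) (mul_le_mul_of_nonneg_left hYtopen hτ0)
  have hBinvYtop : en (B⁻¹.mulVec Ytop) ≤ Real.sqrt ((κ ^ 2 + 1) * (lam1p * m)) := by
    apply en_le_of_sq_le (Real.sqrt_nonneg _)
    rw [Real.sq_sqrt (by positivity), key_inv Ytop]
    have h2 : ∑ j, (T.mulVec Ytop) j ^ 2 ≤ (τ * Real.sqrt (lam1p * m)) ^ 2 :=
      sq_le_en_sq _ hTYtop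
    have h3 : (τ * Real.sqrt (lam1p * m)) ^ 2 = τ ^ 2 * (lam1p * m) := by
      rw [mul_pow, Real.sq_sqrt hl1m]
    have h5 : τ ^ 2 ≤ κ ^ 2 := pow_le_pow_left₀ hτ0 hτκ 2
    have h6 : τ ^ 2 * (lam1p * m) ≤ κ ^ 2 * (lam1p * m) :=
      mul_le_mul_of_nonneg_right h5 hl1m
    have h7 := h2.trans_eq h3
    linarith
  have hs_abs : |s| ≤ Real.sqrt (κ ^ 2 + 1) * (lam1p * m) := by
    have h1 := abs_dot_le Zv (B⁻¹.mulVec Ytop)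
    have h2 : en Zv * en (B⁻¹.mulVec Ytop)
        ≤ Real.sqrt (lam1p * m) * Real.sqrt ((κ ^ 2 + 1) * (lam1p * m)) :=
      mul_le_mul hZen hBinvYtop (en_nonneg _) (Real.sqrt_nonneg _)
    have h3 : Real.sqrt (lam1p * m) * Real.sqrt ((κ ^ 2 + 1) * (lam1p * m))
        = Real.sqrt (κ ^ 2 + 1) * (lam1p * m) := by
      rw [Real.sqrt_mul (by positivity : (0:ℝ) ≤ κ ^ 2 + 1)]
      have h4 : Real.sqrt (lam1p * m) * Real.sqrt (lam1p * m) = lam1p * m :=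
        Real.mul_self_sqrt hl1m
      calc Real.sqrt (lam1p * m) * (Real.sqrt (κ ^ 2 + 1) * Real.sqrt (lam1p * m))
          = Real.sqrt (κ ^ 2 + 1) * (Real.sqrt (lam1p * m) * Real.sqrt (lam1p * m)) := by ring
        _ = Real.sqrt (κ ^ 2 + 1) * (lam1p * m) := by rw [h4]
    rw [h3] at h2
    exact le_trans h1 h2
  have hηs : η * |s| ≤ 1 / 2 := by
    have h2 : η * (Real.sqrt (κ ^ 2 + 1) * (lam1p * m)) ≤ 1 / 2 := by
      have h4 : η * (Real.sqrt (κ ^ 2 + 1) * (lam1p * m))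
          = (2 * lam1p * Real.sqrt (κ ^ 2 + 1) * m * η) / 2 := by ring
      rw [h4]; linarith
    exact le_trans (mul_le_mul_of_nonneg_left hs_abs hη.le) h2
  have part1 : (1 / 2 : ℝ) ≤ 1 + η * s := by
    have h3 : -s ≤ |s| := neg_le_abs s
    have h4 : η * (-s) ≤ η * |s| := mul_le_mul_of_nonneg_left h3 hη.le
    linarith
  set a : ℝ := 1 + η * s with hadef
  have ha : (1 / 2 : ℝ) ≤ a := part1
  have ha0 : a ≠ 0 := ne_of_gt (lt_of_lt_of_le one_half_pos ha)
  -- Sherman–Morrison structure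
  set M : Matrix (Fin d) (Fin d) ℝ :=
    (1 : Matrix (Fin d) (Fin d) ℝ) + η • Matrix.vecMulVec (Y ω) (Y ω) with hMdef
  set w : Fin p → ℝ := Matrix.vecMul Zv B⁻¹ with hwdef
  have hwYtop : w ⬝ᵥ Ytop = s := (Matrix.dotProduct_mulVec Zv B⁻¹ Ytop).symm
  have hMV : M * V = V + η • (vecMulVec (Y ω) (Y ω) * V) := by
    rw [hMdef, Matrix.add_mul, Matrix.one_mul, Matrix.smul_mul]
  have hval : ∀ (aa : Fin d) (j : Fin p),
      (vecMulVec (Y ω) (Y ω) * V) aa j = Y ω aa * Zv j := by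
    intro aa j
    rw [Matrix.mul_apply, hZvdef]
    simp only [vecMulVec_apply]
    rw [Finset.mul_sum]
    exact Finset.sum_congr rfl fun l _ => by ring
  have htop : topBlock hpd.le (M * V) = B + η • vecMulVec Ytop Zv := by
    ext i j
    show (M * V) (Fin.castLE hpd.le i) j = B i j + (η • vecMulVec Ytop Zv) i j
    rw [hMV, Matrix.add_apply, Matrix.smul_apply, hval]
    simp only [Matrix.smul_apply, vecMulVec_apply, smul_eq_mul]
    rfl
  have hbot : botBlock (M * V) = C + η • vecMulVec Ybot Zv := by
    ext i j
    show (M * V) ⟨p + i, by have := i.isLt; omega⟩ j = C i j + (η • vecMulVec Ybot Zv) i j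
    rw [hMV, Matrix.add_apply, Matrix.smul_apply, hval]
    simp only [Matrix.smul_apply, vecMulVec_apply, smul_eq_mul]
    rfl
  have hwB : Matrix.vecMul w B = Zv := by
    rw [hwdef, Matrix.vecMul_vecMul, hBinvB, Matrix.vecMul_one]
  have hfac : topBlock hpd.le (M * V) = (1 + η • vecMulVec Ytop w) * B := by
    rw [htop, Matrix.add_mul, Matrix.one_mul, Matrix.smul_mul, _root_.vecMulVec_mul, hwB]
  have hdet : (topBlock hpd.le (M * V)).det = a * B.det := by
    rw [hfac, Matrix.det_mul, det_one_add_smul_vecMulVec, hwYtop]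
  have hunit : IsUnit (topBlock hpd.le (M * V)) := by
    rw [Matrix.isUnit_iff_isUnit_det, hdet, isUnit_iff_ne_zero]
    exact mul_ne_zero ha0 hdetB.ne_zero
  refine ⟨part1, hunit, ?_⟩
  -- the increment identity
  set u : Fin (d - p) → ℝ := Ybot - T.mulVec Ytop with hudef
  set c0 : ℝ := η / a with hc0def
  have hc0a : c0 * a = η := div_mul_cancel₀ η ha0
  have hkey : (T + c0 • vecMulVec u w) * topBlock hpd.le (M * V) = botBlock (M * V) := by
    rw [htop, hbot, Matrix.add_mul, Matrix.mul_add, Matrix.mul_add, Matrix.smul_mul,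
      Matrix.smul_mul, Matrix.mul_smul, Matrix.mul_smul, _root_.mul_vecMulVec, _root_.vecMulVec_mul, hwB,
      _root_.vecMulVec_mul_vecMulVec, hwYtop, hTB]
    have hvec : T.mulVec Ytop + u = Ybot := by rw [hudef]; abel
    have hu2 : vecMulVec Ybot Zv = vecMulVec (T.mulVec Ytop) Zv + vecMulVec u Zv := by
      rw [← hvec, vecMulVec_add_left]
    rw [hu2]
    have hc0a' : c0 * (1 + η * s) = η := by rw [← hadef]; exact hc0a
    match_scalars
    · ring
    · ring
    · linear_combination hc0a'
  have hTplus : botBlock (M * V) * (topBlock hpd.le (M * V))⁻¹ = T + c0 • vecMulVec u w := by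
    rw [← hkey, Matrix.mul_assoc,
      Matrix.mul_nonsing_inv _ ((Matrix.isUnit_iff_isUnit_det _).mp hunit), Matrix.mul_one]
  -- dot identity for w
  have hwdot : ∀ x : Fin p → ℝ, w ⬝ᵥ x = Ytop ⬝ᵥ x + Ybot ⬝ᵥ (T.mulVec x) := by
    intro x
    have h1 : w ⬝ᵥ x = Zv ⬝ᵥ (B⁻¹.mulVec x) := (Matrix.dotProduct_mulVec Zv B⁻¹ x).symm
    have hZvV : Zv = Matrix.vecMul (Y ω) V := by
      funext j
      simp [Matrix.vecMul, dotProduct, hZvdef]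
      exact Finset.sum_congr rfl fun l _ => by ring
    have h2 : Zv ⬝ᵥ (B⁻¹.mulVec x) = (Y ω) ⬝ᵥ (V.mulVec (B⁻¹.mulVec x)) := by
      rw [hZvV, ← Matrix.dotProduct_mulVec]
    have h3 : (Y ω) ⬝ᵥ (V.mulVec (B⁻¹.mulVec x))
        = Ytop ⬝ᵥ x + Ybot ⬝ᵥ (T.mulVec x) := by
      have hsp := sum_split hpd (fun i => Y ω i * (V.mulVec (B⁻¹.mulVec x)) i)
      have htopx : ∀ j : Fin p, (V.mulVec (B⁻¹.mulVec x)) (Fin.castLE hpd.le j) = x j := by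
        intro j
        have : (V.mulVec (B⁻¹.mulVec x)) (Fin.castLE hpd.le j) = (B.mulVec (B⁻¹.mulVec x)) j := rfl
        rw [this, Matrix.mulVec_mulVec, hBBinv, Matrix.one_mulVec]
      have hbotx : ∀ j : Fin (d - p),
          (V.mulVec (B⁻¹.mulVec x)) ⟨p + j, by have := j.isLt; omega⟩ = (T.mulVec x) j := by
        intro j
        have : (V.mulVec (B⁻¹.mulVec x)) ⟨p + j, by have := j.isLt; omega⟩
            = (C.mulVec (B⁻¹.mulVec x)) j := rfl
        rw [this, Matrix.mulVec_mulVec, ← hTdef]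
      calc (Y ω) ⬝ᵥ (V.mulVec (B⁻¹.mulVec x))
          = ∑ i, Y ω i * (V.mulVec (B⁻¹.mulVec x)) i := rfl
        _ = (∑ j : Fin p, Y ω (Fin.castLE hpd.le j) * (V.mulVec (B⁻¹.mulVec x)) (Fin.castLE hpd.le j))
            + ∑ j : Fin (d - p), Y ω ⟨p + j, by have := j.isLt; omega⟩
              * (V.mulVec (B⁻¹.mulVec x)) ⟨p + j, by have := j.isLt; omega⟩ := hsp
        _ = Ytop ⬝ᵥ x + Ybot ⬝ᵥ (T.mulVec x) := by
            exact congrArg₂ (· + ·)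
              (Finset.sum_congr rfl fun j _ => by rw [htopx j])
              (Finset.sum_congr rfl fun j _ => by rw [hbotx j])
    rw [h1, h2, h3]
  -- final bound
  rw [hTplus, add_sub_cancel_left]
  apply specNorm_le
  intro x hx
  have henx : en x ≤ 1 := en_le_of_sq_le zero_le_one (by simpa using hx)
  rw [Matrix.smul_mulVec, _root_.vecMulVec_mulVec]
  set α : ℝ := Ytop ⬝ᵥ x with hαdef
  set β : ℝ := Ybot ⬝ᵥ (T.mulVec x) with hβdef
  set g₁ : Fin (d - p) → ℝ := α • Ybot - β • (T.mulVec Ytop) with hg1def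
  set g₂ : Fin (d - p) → ℝ := β • Ybot - α • (T.mulVec Ytop) with hg2def
  have hsplit : (w ⬝ᵥ x) • u = g₁ + g₂ := by
    rw [hwdot x, ← hαdef, ← hβdef, hudef, hg1def, hg2def]
    funext i
    simp only [Pi.add_apply, Pi.sub_apply, Pi.smul_apply, smul_eq_mul]
    ring
  set S1 : ℝ := Real.sqrt (lam1p * m) with hS1def
  set S2 : ℝ := Real.sqrt (lamRest * m) with hS2def
  have hS10 : 0 ≤ S1 := Real.sqrt_nonneg _
  have hS20 : 0 ≤ S2 := Real.sqrt_nonneg _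
  have hS1S2 : S1 * S2 = Real.sqrt ν * (lam1p * m) := by
    rw [hS1def, hS2def, show lamRest * m = ν * (lam1p * m) by rw [hrest_eq]; ring,
      Real.sqrt_mul hν]
    have h4 : Real.sqrt (lam1p * m) * Real.sqrt (lam1p * m) = lam1p * m :=
      Real.mul_self_sqrt hl1m
    calc Real.sqrt (lam1p * m) * (Real.sqrt ν * Real.sqrt (lam1p * m))
        = Real.sqrt ν * (Real.sqrt (lam1p * m) * Real.sqrt (lam1p * m)) := by ring
      _ = Real.sqrt ν * (lam1p * m) := by rw [h4]
  have hTx : en (T.mulVec x) ≤ τ := by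
    have h1 := en_mulVec_le T x
    have h2 : τ * en x ≤ τ * 1 := mul_le_mul_of_nonneg_left henx hτ0
    calc en (T.mulVec x) ≤ τ * en x := h1
      _ ≤ τ := by linarith
  have hα : |α| ≤ S1 := by
    have h1 := abs_dot_le Ytop x
    have h2 : en Ytop * en x ≤ S1 * 1 :=
      mul_le_mul hYtopen henx (en_nonneg x) hS10
    calc |α| ≤ en Ytop * en x := h1
      _ ≤ S1 := by linarith
  have hβ : |β| ≤ S2 * τ := by
    have h1 := abs_dot_le Ybot (T.mulVec x)
    have h2 : en Ybot * en (T.mulVec x) ≤ S2 * τ :=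
      mul_le_mul hYboten hTx (en_nonneg _) hS20
    linarith
  have hTYen : en (T.mulVec Ytop) ≤ τ * S1 := hTYtop
  have hg1 : en g₁ ≤ (1 + τ ^ 2) * (Real.sqrt ν * (lam1p * m)) := by
    have h1 : en g₁ ≤ |α| * en Ybot + |β| * en (T.mulVec Ytop) := by
      have := en_sub_le (α • Ybot) (β • (T.mulVec Ytop))
      rwa [en_smul, en_smul] at this
    have h2 : |α| * en Ybot ≤ S1 * S2 :=
      mul_le_mul hα hYboten (en_nonneg _) hS10
    have h3 : |β| * en (T.mulVec Ytop) ≤ (S2 * τ) * (τ * S1) :=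
      mul_le_mul hβ hTYen (en_nonneg _) (by positivity)
    have h4 : S1 * S2 + (S2 * τ) * (τ * S1) = (1 + τ ^ 2) * (S1 * S2) := by ring
    rw [← hS1S2]
    linarith
  -- g₂ via the PSD-shift trick
  set c1 : ℝ := ν₁ * (lam1p * m) with hc1def
  have hc10 : 0 ≤ c1 := by positivity
  have hYb2c : ∑ j, Ybot j ^ 2 ≤ c1 := by
    have h9 : ν * (lam1p * m) ≤ ν₁ * (lam1p * m) := mul_le_mul_of_nonneg_right hνν₁ hl1m
    have h10 : lamRest * m ≤ c1 := by
      rw [hc1def, hrest_eq]; linarith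
    linarith
  have hYt2c : ∑ j, Ytop j ^ 2 ≤ c1 := by
    have h9 : 1 * (lam1p * m) ≤ ν₁ * (lam1p * m) := mul_le_mul_of_nonneg_right hν₁1 hl1m
    have h10 : lam1p * m ≤ c1 := by rw [hc1def]; linarith
    linarith
  have hA1 : en ((Ybot ⬝ᵥ (T.mulVec x)) • Ybot - (c1 / 2) • (T.mulVec x))
      ≤ c1 / 2 * τ := by
    have h1 := keyvec Ybot (T.mulVec x) c1 hYb2c
    have h2 : c1 / 2 * en (T.mulVec x) ≤ c1 / 2 * τ :=
      mul_le_mul_of_nonneg_left hTx (by linarith)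
    linarith
  have hA2 : en ((c1 / 2) • (T.mulVec x) - α • (T.mulVec Ytop)) ≤ τ * (c1 / 2) := by
    have heq : (c1 / 2) • (T.mulVec x) - α • (T.mulVec Ytop)
        = T.mulVec ((c1 / 2) • x - α • Ytop) := by
      rw [Matrix.mulVec_sub, Matrix.mulVec_smul, Matrix.mulVec_smul]
    have hinner : en ((c1 / 2) • x - α • Ytop) ≤ c1 / 2 := by
      have h5 := keyvec Ytop x c1 hYt2c
      have h6 : (c1 / 2) • x - α • Ytop = -((Ytop ⬝ᵥ x) • Ytop - (c1 / 2) • x) := by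
        rw [hαdef]; funext i; simp only [Pi.neg_apply, Pi.sub_apply, Pi.smul_apply,
          smul_eq_mul]; ring
      rw [h6, en_neg]
      have h7 : c1 / 2 * en x ≤ c1 / 2 * 1 :=
        mul_le_mul_of_nonneg_left henx (by linarith)
      linarith
    rw [heq]
    calc en (T.mulVec ((c1 / 2) • x - α • Ytop)) ≤ τ * en ((c1 / 2) • x - α • Ytop) :=
          en_mulVec_le T _
      _ ≤ τ * (c1 / 2) := mul_le_mul_of_nonneg_left hinner hτ0
  have hg2 : en g₂ ≤ τ * c1 := by
    have hg2eq : g₂ = ((Ybot ⬝ᵥ (T.mulVec x)) • Ybot - (c1 / 2) • (T.mulVec x))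
        + ((c1 / 2) • (T.mulVec x) - α • (T.mulVec Ytop)) := by
      rw [hg2def, hβdef]; funext i
      simp only [Pi.add_apply, Pi.sub_apply, Pi.smul_apply, smul_eq_mul]; ring
    rw [hg2eq]
    calc en _ ≤ _ := en_triangle _ _
      _ ≤ c1 / 2 * τ + τ * (c1 / 2) := add_le_add hA1 hA2
      _ = τ * c1 := by ring
  -- assemble
  have hc0pos : 0 < c0 := by
    rw [hc0def]
    exact div_pos hη (by linarith)
  have hc02η : c0 ≤ 2 * η := by
    rw [hc0def, div_le_iff₀ (by linarith : (0:ℝ) < a)]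
    calc η = 2 * η * (1 / 2) := by ring
      _ ≤ 2 * η * a := mul_le_mul_of_nonneg_left ha (by linarith)
  have hgsum : en ((w ⬝ᵥ x) • u) ≤ (1 + τ ^ 2) * (Real.sqrt ν * (lam1p * m)) + τ * c1 := by
    rw [hsplit]
    calc en (g₁ + g₂) ≤ en g₁ + en g₂ := en_triangle _ _
      _ ≤ _ := add_le_add hg1 hg2
  calc en (c0 • ((w ⬝ᵥ x) • u)) = c0 * en ((w ⬝ᵥ x) • u) := by
        rw [en_smul, abs_of_pos hc0pos]
    _ ≤ (2 * η) * ((1 + τ ^ 2) * (Real.sqrt ν * (lam1p * m)) + τ * c1) := by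
        apply mul_le_mul hc02η hgsum (en_nonneg _) (by linarith)
    _ = 2 * m * η * (Real.sqrt ν * lam1p * (1 + τ ^ 2) + ν₁ * lam1p * τ) := by
        rw [hc1def]; ring
end

section
/- Characterization of the spectral neighborhood 𝕊(κ). Let d > p ≥ 1, let V ∈ ℝ^{d×p} satisfy VᵀV = I_p, and let κ ≥ 0. Write V̄ := V_{(1:p,:)} and V̲ := V_{(p+1:d,:)}. Then every singular value of V̄ lies in the interval [1/√(1+κ²), 1] if and only if V̄ is invertible and ‖V̲ V̄^{−1}‖₂ ≤ κ, where ‖·‖₂ is the spectral norm. -/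
open Matrix

/-- `s` is a singular value of `A` iff `s ≥ 0` and `s²` is an eigenvalue of `AᵀA`. -/
def IsSingularValue {m n : ℕ} (A : Matrix (Fin m) (Fin n) ℝ) (s : ℝ) : Prop :=
  0 ≤ s ∧ s ^ 2 ∈ spectrum ℝ (Aᵀ * A)

section Aux

lemma herm_spectrum_eq {n : Type*} [Fintype n] [DecidableEq n] {H : Matrix n n ℝ}
    (hH : H.IsHermitian) : spectrum ℝ H = Set.range hH.eigenvalues := by
  have hU := hH.eigenvectorUnitary.2
  rw [Unitary.mem_iff] at hU
  let u : (Matrix n n ℝ)ˣ := ⟨(hH.eigenvectorUnitary : Matrix n n ℝ),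
    star (hH.eigenvectorUnitary : Matrix n n ℝ), hU.2, hU.1⟩
  have h : H = (u : Matrix n n ℝ) * diagonal hH.eigenvalues *
      ((u⁻¹ : (Matrix n n ℝ)ˣ) : Matrix n n ℝ) := by
    have h2 := hH.spectral_theorem
    simpa [u, Function.comp] using h2
  conv_lhs => rw [h]
  rw [spectrum.units_conjugate, spectrum_diagonal]

lemma spec_nonneg {n : Type*} [Fintype n] [DecidableEq n] {M : Matrix n n ℝ}
    (hM : M.PosSemidef) {μ : ℝ} (hμ : μ ∈ spectrum ℝ M) : 0 ≤ μ := by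
  rw [herm_spectrum_eq hM.1] at hμ
  obtain ⟨i, rfl⟩ := hμ
  exact hM.eigenvalues_nonneg i

lemma sum_sq_eq_dot {n : Type*} [Fintype n] (v : n → ℝ) : ∑ i, v i ^ 2 = v ⬝ᵥ v := by
  simp [dotProduct, pow_two]

lemma quad_form {m n : Type*} [Fintype m] [Fintype n] (M : Matrix m n ℝ) (x : n → ℝ) :
    x ⬝ᵥ (Mᵀ * M) *ᵥ x = ∑ i, (M *ᵥ x) i ^ 2 := by
  rw [sum_sq_eq_dot, ← mulVec_mulVec, dotProduct_mulVec, vecMul_transpose]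

lemma sqrt_sum_sq_le {m n : ℕ} (M : Matrix (Fin m) (Fin n) ℝ) (x : Fin n → ℝ)
    (hx : ∑ j, x j ^ 2 ≤ 1) :
    Real.sqrt (∑ i, (M.mulVec x) i ^ 2) ≤ Real.sqrt (∑ i, ∑ j, M i j ^ 2) := by
  apply Real.sqrt_le_sqrt
  apply Finset.sum_le_sum
  intro i _
  calc (M.mulVec x) i ^ 2 = (∑ j, M i j * x j) ^ 2 := by rfl
    _ ≤ (∑ j, M i j ^ 2) * ∑ j, x j ^ 2 := Finset.sum_mul_sq_le_sq_mul_sq _ _ _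
    _ ≤ (∑ j, M i j ^ 2) * 1 :=
        mul_le_mul_of_nonneg_left hx (Finset.sum_nonneg fun _ _ => sq_nonneg _)
    _ = ∑ j, M i j ^ 2 := mul_one _

lemma specNorm_le_iff {m n : ℕ} (M : Matrix (Fin m) (Fin n) ℝ) {κ : ℝ} (hκ : 0 ≤ κ) :
    specNorm M ≤ κ ↔
      ∀ x : Fin n → ℝ, ∑ j, x j ^ 2 ≤ 1 → ∑ i, (M.mulVec x) i ^ 2 ≤ κ ^ 2 := by
  have hne : {c : ℝ | ∃ x : Fin n → ℝ, ∑ j, x j ^ 2 ≤ 1 ∧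
      c = Real.sqrt (∑ i, (M.mulVec x) i ^ 2)}.Nonempty :=
    ⟨Real.sqrt (∑ i, (M.mulVec 0) i ^ 2), 0, by simp⟩
  have hbdd : BddAbove {c : ℝ | ∃ x : Fin n → ℝ, ∑ j, x j ^ 2 ≤ 1 ∧
      c = Real.sqrt (∑ i, (M.mulVec x) i ^ 2)} := by
    refine ⟨Real.sqrt (∑ i, ∑ j, M i j ^ 2), ?_⟩
    rintro c ⟨x, hx, rfl⟩
    exact sqrt_sum_sq_le M x hx
  constructor
  · intro h x hx
    have hmem : Real.sqrt (∑ i, (M.mulVec x) i ^ 2) ∈ {c : ℝ | ∃ x : Fin n → ℝ,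
        ∑ j, x j ^ 2 ≤ 1 ∧ c = Real.sqrt (∑ i, (M.mulVec x) i ^ 2)} := ⟨x, hx, rfl⟩
    have hle : Real.sqrt (∑ i, (M.mulVec x) i ^ 2) ≤ κ :=
      (le_csSup hbdd hmem).trans h
    have h0 : (0:ℝ) ≤ ∑ i, (M.mulVec x) i ^ 2 := Finset.sum_nonneg fun _ _ => sq_nonneg _
    calc ∑ i, (M.mulVec x) i ^ 2 = Real.sqrt (∑ i, (M.mulVec x) i ^ 2) ^ 2 :=
          (Real.sq_sqrt h0).symm
      _ ≤ κ ^ 2 := pow_le_pow_left₀ (Real.sqrt_nonneg _) hle 2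
  · intro h
    apply csSup_le hne
    rintro c ⟨x, hx, rfl⟩
    calc Real.sqrt (∑ i, (M.mulVec x) i ^ 2) ≤ Real.sqrt (κ ^ 2) :=
          Real.sqrt_le_sqrt (h x hx)
      _ = κ := Real.sqrt_sq hκ

lemma fin_sum_split {d p : ℕ} (h : p ≤ d) (f : Fin d → ℝ) :
    ∑ i, f i = (∑ i : Fin p, f (Fin.castLE h i)) +
      ∑ i : Fin (d - p), f ⟨p + i, by have := i.isLt; omega⟩ := by
  rw [← Equiv.sum_comp (finSumFinEquiv.trans (finCongr (Nat.add_sub_cancel' h))) f,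
    Fintype.sum_sum_type]
  congr 1

end Aux

/-- Characterization of the spectral neighborhood `𝕊(κ)`: for a `d×p` matrix `V` with
orthonormal columns and `κ ≥ 0`, all singular values of the top block `V̄` lie in
`[1/√(1+κ²), 1]` iff `V̄` is invertible and `‖V̲ V̄⁻¹‖₂ ≤ κ`. -/
theorem sphere_characterization (d p : ℕ) (hp : 1 ≤ p) (hpd : p < d)
    (V : Matrix (Fin d) (Fin p) ℝ) (hV : Vᵀ * V = 1) (κ : ℝ) (hκ : 0 ≤ κ) :
    (∀ s : ℝ, IsSingularValue (topBlock hpd.le V) s →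
        1 / Real.sqrt (1 + κ ^ 2) ≤ s ∧ s ≤ 1) ↔
      (IsUnit (topBlock hpd.le V) ∧
        specNorm (botBlock V * (topBlock hpd.le V)⁻¹) ≤ κ) := by
  set A := topBlock hpd.le V with hAdef
  set B := botBlock V with hBdef
  have hk1 : (0:ℝ) < 1 + κ ^ 2 := by positivity
  -- block sum identity
  have hsum : Aᵀ * A + Bᵀ * B = 1 := by
    ext j k
    have h1 := congrFun (congrFun hV j) k
    rw [Matrix.mul_apply] at h1
    rw [fin_sum_split hpd.le (fun i => Vᵀ j i * V i k)] at h1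
    simpa [Matrix.add_apply, Matrix.mul_apply, hAdef, hBdef, topBlock, botBlock,
      Matrix.transpose_apply] using h1
  have hG1 : Bᵀ * B = 1 - Aᵀ * A := eq_sub_of_add_eq' hsum
  have hherm : (Aᵀ * A).IsHermitian := by
    have h := isHermitian_conjTranspose_mul_self A
    rwa [conjTranspose_eq_transpose_of_trivial] at h
  have hpsdH : (Aᵀ * A).PosSemidef := by
    have h := posSemidef_conjTranspose_mul_self A
    rwa [conjTranspose_eq_transpose_of_trivial] at h
  have hpsdG : (Bᵀ * B).PosSemidef := by
    have h := posSemidef_conjTranspose_mul_self B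
    rwa [conjTranspose_eq_transpose_of_trivial] at h
  set N : Matrix (Fin p) (Fin p) ℝ := Aᵀ * A - (1 + κ ^ 2)⁻¹ • 1 with hNdef
  have hNherm : N.IsHermitian := by
    show Nᴴ = N
    rw [conjTranspose_eq_transpose_of_trivial]
    simp [hNdef, transpose_sub, transpose_mul, transpose_smul]
  have hNform : ∀ x : Fin p → ℝ,
      x ⬝ᵥ N *ᵥ x = x ⬝ᵥ (Aᵀ * A) *ᵥ x - (1 + κ ^ 2)⁻¹ * (x ⬝ᵥ x) := by
    intro x
    rw [hNdef, sub_mulVec, dotProduct_sub, smul_mulVec, one_mulVec, dotProduct_smul]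
    rfl
  -- the central quadratic-form property
  set P : Prop := ∀ y : Fin p → ℝ, y ⬝ᵥ y ≤ (1 + κ ^ 2) * (y ⬝ᵥ (Aᵀ * A) *ᵥ y) with hPdef
  have hNalg : N = Aᵀ * A - algebraMap ℝ (Matrix (Fin p) (Fin p) ℝ) ((1 + κ ^ 2)⁻¹) := by
    rw [Algebra.algebraMap_eq_smul_one]
  have equiv1 : N.PosSemidef ↔ P := by
    constructor
    · intro hN y
      have h := hN.dotProduct_mulVec_nonneg y
      rw [show star y = y from by simp, hNform y] at h
      have h2 : (1 + κ ^ 2)⁻¹ * (y ⬝ᵥ y) ≤ y ⬝ᵥ (Aᵀ * A) *ᵥ y := by linarith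
      have h3 := mul_le_mul_of_nonneg_left h2 hk1.le
      rwa [← mul_assoc, mul_inv_cancel₀ hk1.ne', one_mul] at h3
    · intro hP
      refine .of_dotProduct_mulVec_nonneg hNherm fun x => ?_
      rw [show star x = x from by simp, hNform x]
      have h := hP x
      have h2 := mul_le_mul_of_nonneg_left h (inv_nonneg.mpr hk1.le)
      rw [← mul_assoc, inv_mul_cancel₀ hk1.ne', one_mul] at h2
      linarith
  have equiv2 : N.PosSemidef ↔
      (∀ s : ℝ, IsSingularValue A s → 1 / Real.sqrt (1 + κ ^ 2) ≤ s ∧ s ≤ 1) := by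
    constructor
    · intro hN s hs
      obtain ⟨hs0, hs2⟩ := hs
      constructor
      · have hmem : s ^ 2 - (1 + κ ^ 2)⁻¹ ∈ spectrum ℝ N := by
          rw [hNalg, ← spectrum.sub_singleton_eq]
          exact Set.sub_mem_sub hs2 rfl
        have hc := spec_nonneg hN hmem
        have hcle : (1 + κ ^ 2)⁻¹ ≤ s ^ 2 := by linarith
        have := Real.sqrt_le_sqrt hcle
        rwa [Real.sqrt_inv, Real.sqrt_sq hs0, ← one_div] at this
      · have hmem : 1 - s ^ 2 ∈ spectrum ℝ (Bᵀ * B) := by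
          rw [hG1, show (1 : Matrix (Fin p) (Fin p) ℝ) - Aᵀ * A =
            algebraMap ℝ (Matrix (Fin p) (Fin p) ℝ) 1 - Aᵀ * A from by rw [_root_.map_one],
            ← spectrum.singleton_sub_eq]
          exact Set.sub_mem_sub rfl hs2
        have hc := spec_nonneg hpsdG hmem
        nlinarith [hc, hs0]
    · intro hLHS
      apply (Matrix.IsHermitian.posSemidef_iff_eigenvalues_nonneg hNherm).mpr
      intro i
      have hmem0 := hNherm.eigenvalues_mem_spectrum_real i
      have hmem : hNherm.eigenvalues i ∈
          spectrum ℝ (Aᵀ * A - algebraMap ℝ (Matrix (Fin p) (Fin p) ℝ) ((1 + κ ^ 2)⁻¹)) := by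
        rw [← hNalg]; exact hmem0
      rw [← spectrum.sub_singleton_eq] at hmem
      obtain ⟨μ, hμ, r, hr, hμr⟩ := hmem
      rw [Set.mem_singleton_iff] at hr
      subst hr
      have hμ0 : 0 ≤ μ := spec_nonneg hpsdH hμ
      have hsing : IsSingularValue A (Real.sqrt μ) :=
        ⟨Real.sqrt_nonneg _, by rwa [Real.sq_sqrt hμ0]⟩
      have hb := (hLHS _ hsing).1
      have hXX : Real.sqrt (1 + κ ^ 2) * Real.sqrt (1 + κ ^ 2) = 1 + κ ^ 2 :=
        Real.mul_self_sqrt hk1.le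
      have hμμ : Real.sqrt μ * Real.sqrt μ = μ := Real.mul_self_sqrt hμ0
      have h2 := mul_self_le_mul_self (by positivity) hb
      rw [hμμ, div_mul_div_comm, hXX, one_mul] at h2
      have hle : (1 + κ ^ 2)⁻¹ ≤ μ := by rwa [one_div] at h2
      show (0:ℝ) ≤ hNherm.eigenvalues i
      linarith [hμr, hle]
  have equiv3 : P ↔ (IsUnit A ∧ specNorm (B * A⁻¹) ≤ κ) := by
    constructor
    · intro hP
      have hinj : Function.Injective A.mulVec := by
        intro x y hxy
        have h0 : A *ᵥ (x - y) = 0 := by rw [mulVec_sub, hxy, sub_self]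
        have h1 := hP (x - y)
        rw [quad_form, h0] at h1
        have hz : ∑ i, (0 : Fin p → ℝ) i ^ 2 = 0 := by simp
        rw [hz, mul_zero] at h1
        have h2 : (0:ℝ) ≤ (x - y) ⬝ᵥ (x - y) := by
          rw [← sum_sq_eq_dot]; exact Finset.sum_nonneg fun _ _ => sq_nonneg _
        have h3 : (x - y) ⬝ᵥ (x - y) = 0 := le_antisymm h1 h2
        have := dotProduct_self_eq_zero.mp h3
        exact sub_eq_zero.mp this
      have hunit : IsUnit A := mulVec_injective_iff_isUnit.mp hinj
      refine ⟨hunit, ?_⟩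
      rw [specNorm_le_iff _ hκ]
      intro x hx
      have hdet : IsUnit A.det := (isUnit_iff_isUnit_det A).mp hunit
      have hAinv : A * A⁻¹ = 1 := mul_nonsing_inv A hdet
      set y := A⁻¹ *ᵥ x with hydef
      have hxy : A *ᵥ y = x := by
        rw [hydef, mulVec_mulVec, hAinv, one_mulVec]
      have e1 : ∑ i, ((B * A⁻¹) *ᵥ x) i ^ 2 = y ⬝ᵥ (Bᵀ * B) *ᵥ y := by
        rw [quad_form, ← mulVec_mulVec]
      have e3 : y ⬝ᵥ (Aᵀ * A) *ᵥ y = ∑ j, x j ^ 2 := by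
        rw [quad_form, hxy]
      have hxd : ∑ j, x j ^ 2 ≤ 1 := hx
      have hP' := hP y
      rw [e1, hG1, sub_mulVec, one_mulVec, dotProduct_sub, e3]
      have hq0 : (0:ℝ) ≤ ∑ j, x j ^ 2 := Finset.sum_nonneg fun _ _ => sq_nonneg _
      rw [e3] at hP'
      nlinarith [hP', hxd, hq0, hκ, sq_nonneg κ]
    · rintro ⟨hunit, hnorm⟩
      rw [specNorm_le_iff _ hκ] at hnorm
      intro y
      have hdet : IsUnit A.det := (isUnit_iff_isUnit_det A).mp hunit
      have hAinv : A⁻¹ * A = 1 := nonsing_inv_mul A hdet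
      set x := A *ᵥ y with hxdef
      have hyx : A⁻¹ *ᵥ x = y := by
        rw [hxdef, mulVec_mulVec, hAinv, one_mulVec]
      have hxs : ∑ j, x j ^ 2 = y ⬝ᵥ (Aᵀ * A) *ᵥ y := (quad_form A y).symm
      set t : ℝ := ∑ j, x j ^ 2 with htdef
      have ht0 : 0 ≤ t := Finset.sum_nonneg fun _ _ => sq_nonneg _
      rcases eq_or_lt_of_le ht0 with hteq | htpos
      · -- t = 0 : then x = 0, hence y = 0
        have hx0 : x = 0 := by
          rw [← dotProduct_self_eq_zero, ← sum_sq_eq_dot]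
          exact hteq.symm
        have hy0 : y = 0 := by rw [← hyx, hx0, mulVec_zero]
        subst hy0
        simp
      · -- t > 0
        set u : Fin p → ℝ := (Real.sqrt t)⁻¹ • x with hudef
        have hst : Real.sqrt t ^ 2 = t := Real.sq_sqrt ht0
        have hstpos : 0 < Real.sqrt t := Real.sqrt_pos.mpr htpos
        have hu1 : ∑ j, u j ^ 2 ≤ 1 := by
          have : ∑ j, u j ^ 2 = ((Real.sqrt t)⁻¹) ^ 2 * ∑ j, x j ^ 2 := by
            rw [Finset.mul_sum]
            refine Finset.sum_congr rfl fun j _ => ?_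
            rw [hudef]
            simp [mul_pow]
          rw [this, ← htdef, inv_pow, hst]
          rw [inv_mul_cancel₀ (ne_of_gt htpos)]
        have hnu := hnorm u hu1
        have hmv : (B * A⁻¹) *ᵥ u = (Real.sqrt t)⁻¹ • ((B * A⁻¹) *ᵥ x) := by
          rw [hudef, mulVec_smul]
        have hsum2 : ∑ i, ((B * A⁻¹) *ᵥ u) i ^ 2
            = ((Real.sqrt t)⁻¹) ^ 2 * ∑ i, ((B * A⁻¹) *ᵥ x) i ^ 2 := by
          rw [hmv, Finset.mul_sum]
          refine Finset.sum_congr rfl fun i _ => ?_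
          simp [mul_pow]
        have hkey : ∑ i, ((B * A⁻¹) *ᵥ x) i ^ 2 ≤ κ ^ 2 * t := by
          rw [hsum2, inv_pow, hst] at hnu
          have h5 := mul_le_mul_of_nonneg_left hnu ht0
          rw [← mul_assoc, mul_inv_cancel₀ (ne_of_gt htpos), one_mul] at h5
          linarith [h5]
        have e1 : ∑ i, ((B * A⁻¹) *ᵥ x) i ^ 2 = y ⬝ᵥ (Bᵀ * B) *ᵥ y := by
          rw [quad_form, ← mulVec_mulVec, hyx]
        rw [e1, hG1, sub_mulVec, one_mulVec, dotProduct_sub, ← hxs] at hkey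
        rw [← hxs]
        linarith
  rw [← equiv2, equiv1, equiv3]
end
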